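/- Let k ≥ 1, let 0 ≤ q < 1 and 0 < p_min, and let P be a k×k real diagonal matrix whose diagonal entries are all at least p_min and sum to 1. Set E := (1−q)I + (q/k)O and P' := (1−q)P + (q/k)I. Then det(E·P) > 0, det(P') > 0, and −log( det(E·P) / √(det(P')·det(P)) ) ≤ (1−k)·log(1−q) − (k/2)·log(k·p_min). (This bounds the information distance η_max between a clean node and its noisy observation through a k-ary symmetric channel: d_{i',i} ≤ (1−k)log(1−q_max) − 0.5k·log(k·p_min).) -/

import Mathlib

/-- The `k × k` all-ones matrix `O`. -/
noncomputable def allOnes (k : ℕ) : Matrix (Fin k) (Fin k) ℝ :=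
  Matrix.of fun _ _ => (1 : ℝ)

/-- Bound on the information distance between a clean node and its noisy observation
through a `k`-ary symmetric channel: for `k ≥ 1`, `0 ≤ q < 1`, `0 < p_min`, and `P`
diagonal with entries `≥ p_min` summing to 1, with `E = (1−q)I + (q/k)O` and
`P' = (1−q)P + (q/k)I`, we have `det(E·P) > 0`, `det(P') > 0`, and
`−log(det(E·P)/√(det(P')·det(P))) ≤ (1−k)·log(1−q) − (k/2)·log(k·p_min)`. -/
theorem noisy_node_distance_bound (k : ℕ) (hk : 1 ≤ k) (q pmin : ℝ)
    (hq0 : 0 ≤ q) (hq1 : q < 1) (hp : 0 < pmin)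
    (d : Fin k → ℝ) (hd : ∀ i, pmin ≤ d i) (hsum : ∑ i, d i = 1) :
    0 < (((1 - q) • (1 : Matrix (Fin k) (Fin k) ℝ) + (q / k) • allOnes k)
          * Matrix.diagonal d).det ∧
    0 < ((1 - q) • Matrix.diagonal d + (q / k) • (1 : Matrix (Fin k) (Fin k) ℝ)).det ∧
    -Real.log
        ((((1 - q) • (1 : Matrix (Fin k) (Fin k) ℝ) + (q / k) • allOnes k)
            * Matrix.diagonal d).det
          / Real.sqrt
              (((1 - q) • Matrix.diagonal d
                  + (q / k) • (1 : Matrix (Fin k) (Fin k) ℝ)).det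
                * (Matrix.diagonal d).det))
      ≤ (1 - (k : ℝ)) * Real.log (1 - q) - ((k : ℝ) / 2) * Real.log ((k : ℝ) * pmin) := by
  have ha0 : (0:ℝ) < 1 - q := by linarith
  have hk0 : (0:ℝ) < (k:ℝ) := by exact_mod_cast Nat.lt_of_lt_of_le Nat.zero_lt_one hk
  have hane : (1 - q) ≠ 0 := ne_of_gt ha0
  have hkne : (k:ℝ) ≠ 0 := ne_of_gt hk0
  -- det E = (1-q)^(k-1)
  have hE : ((1 - q) • (1 : Matrix (Fin k) (Fin k) ℝ) + (q / k) • allOnes k)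
      = (1 - q) • (1 + Matrix.replicateCol Unit (fun _ => q / (k * (1 - q)))
          * Matrix.replicateRow Unit (fun _ => (1:ℝ))) := by
    ext i j
    simp only [allOnes, Matrix.add_apply, Matrix.smul_apply, Matrix.one_apply,
      Matrix.mul_apply, Matrix.replicateCol_apply, Matrix.replicateRow_apply, Matrix.of_apply,
      Finset.sum_const, smul_eq_mul]
    split_ifs <;> simp only [Finset.card_univ, Fintype.card_unit, one_smul, mul_one] <;>
      rw [mul_add, mul_div_assoc', mul_comm (k:ℝ) (1 - q), mul_div_mul_left _ _ hane] <;> ring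
  have hdetE : ((1 - q) • (1 : Matrix (Fin k) (Fin k) ℝ) + (q / k) • allOnes k).det
      = (1 - q) ^ (k - 1) := by
    rw [hE, Matrix.det_smul, Matrix.det_one_add_replicateCol_mul_replicateRow]
    have hdp : dotProduct (fun _ : Fin k => (1:ℝ)) (fun _ => q / (k * (1 - q)))
        = (k:ℝ) * (q / (k * (1 - q))) := by
      simp [dotProduct, Finset.sum_const, Finset.card_univ]
    rw [hdp]
    have h1 : 1 + (k:ℝ) * (q / (k * (1 - q))) = (1 - q)⁻¹ := by
      field_simp
      ring
    rw [h1]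
    have hpow : (1 - q) ^ k = (1 - q) ^ (k - 1) * (1 - q) := by
      rw [← pow_succ, Nat.sub_add_cancel hk]
    simp only [smul_eq_mul, Fintype.card_fin]
    rw [hpow]
    field_simp
  -- positivity facts
  have hdpos : ∀ i, 0 < d i := fun i => lt_of_lt_of_le hp (hd i)
  have hDpos : 0 < ∏ i, d i := Finset.prod_pos fun i _ => hdpos i
  have hD'entry : ∀ i, 0 < (1 - q) * d i + q / k := fun i => by
    have := hdpos i
    have hqk : 0 ≤ q / k := div_nonneg hq0 (le_of_lt hk0)
    nlinarith
  have hD'pos : 0 < ∏ i, ((1 - q) * d i + q / k) :=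
    Finset.prod_pos fun i _ => hD'entry i
  -- P' is diagonal
  have hP' : ((1 - q) • Matrix.diagonal d + (q / k) • (1 : Matrix (Fin k) (Fin k) ℝ))
      = Matrix.diagonal (fun i => (1 - q) * d i + q / k) := by
    ext i j
    by_cases h : i = j
    · subst h; simp [Matrix.diagonal_apply, Matrix.one_apply]
    · simp [Matrix.diagonal_apply, Matrix.one_apply, h]
  have hdetEP : (((1 - q) • (1 : Matrix (Fin k) (Fin k) ℝ) + (q / k) • allOnes k)
      * Matrix.diagonal d).det = (1 - q) ^ (k - 1) * ∏ i, d i := by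
    rw [Matrix.det_mul, hdetE, Matrix.det_diagonal]
  have hdetP' : ((1 - q) • Matrix.diagonal d
      + (q / k) • (1 : Matrix (Fin k) (Fin k) ℝ)).det
      = ∏ i, ((1 - q) * d i + q / k) := by
    rw [hP', Matrix.det_diagonal]
  have hEPpos : 0 < (1 - q) ^ (k - 1) * ∏ i, d i :=
    mul_pos (pow_pos ha0 _) hDpos
  refine ⟨by rw [hdetEP]; exact hEPpos, by rw [hdetP']; exact hD'pos, ?_⟩
  rw [hdetEP, hdetP', Matrix.det_diagonal]
  -- key: k * pmin ≤ 1
  have hkp1 : (k:ℝ) * pmin ≤ 1 := by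
    have : (k:ℝ) * pmin = ∑ _i : Fin k, pmin := by
      simp [Finset.sum_const, Finset.card_univ, mul_comm]
    rw [this, ← hsum]
    exact Finset.sum_le_sum fun i _ => hd i
  have hkppos : 0 < (k:ℝ) * pmin := mul_pos hk0 hp
  -- key product inequality
  have hkey : ∏ i, ((1 - q) * d i + q / k) ≤ (∏ i, d i) * ((k:ℝ) * pmin)⁻¹ ^ k := by
    have hfac : ∀ i, (1 - q) * d i + q / k ≤ d i * ((k:ℝ) * pmin)⁻¹ := by
      intro i
      have h1 : (1 - q) * d i ≤ (1 - q) * d i * ((k:ℝ) * pmin)⁻¹ :=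
        le_mul_of_one_le_right (mul_nonneg (le_of_lt ha0) (le_of_lt (hdpos i)))
          (one_le_inv_iff₀.2 ⟨hkppos, hkp1⟩)
      have h2 : q / k ≤ q * d i * ((k:ℝ) * pmin)⁻¹ := by
        rw [div_le_iff₀ hk0] at *
        have : q * d i * ((k:ℝ) * pmin)⁻¹ * k = q * (d i / pmin) := by
          field_simp
        rw [this]
        have hdp : 1 ≤ d i / pmin := (one_le_div hp).2 (hd i)
        nlinarith
      calc (1 - q) * d i + q / k
          ≤ (1 - q) * d i * ((k:ℝ) * pmin)⁻¹ + q * d i * ((k:ℝ) * pmin)⁻¹ :=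
            add_le_add h1 h2
        _ = d i * ((k:ℝ) * pmin)⁻¹ := by ring
    calc ∏ i, ((1 - q) * d i + q / k) ≤ ∏ i, (d i * ((k:ℝ) * pmin)⁻¹) :=
          Finset.prod_le_prod (fun i _ => le_of_lt (hD'entry i)) (fun i _ => hfac i)
      _ = (∏ i, d i) * ((k:ℝ) * pmin)⁻¹ ^ k := by
          rw [Finset.prod_mul_distrib, Finset.prod_const, Finset.card_univ, Fintype.card_fin]
  -- log computations
  set D : ℝ := ∏ i, d i with hDdef
  set D' : ℝ := ∏ i, ((1 - q) * d i + q / k) with hD'def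
  have hsqrt : Real.sqrt (D' * D) = Real.sqrt D' * Real.sqrt D :=
    Real.sqrt_mul (le_of_lt hD'pos) _
  have hsqrtpos : 0 < Real.sqrt D' * Real.sqrt D :=
    mul_pos (Real.sqrt_pos.2 hD'pos) (Real.sqrt_pos.2 hDpos)
  rw [hsqrt, Real.log_div (ne_of_gt hEPpos) (ne_of_gt hsqrtpos),
    Real.log_mul (ne_of_gt (pow_pos ha0 _)) (ne_of_gt hDpos),
    Real.log_mul (ne_of_gt (Real.sqrt_pos.2 hD'pos)) (ne_of_gt (Real.sqrt_pos.2 hDpos)),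
    Real.log_sqrt (le_of_lt hD'pos), Real.log_sqrt (le_of_lt hDpos),
    Real.log_pow]
  have hlogD' : Real.log D' ≤ Real.log D - (k:ℝ) * Real.log ((k:ℝ) * pmin) := by
    have : Real.log (D * ((k:ℝ) * pmin)⁻¹ ^ k)
        = Real.log D - (k:ℝ) * Real.log ((k:ℝ) * pmin) := by
      rw [Real.log_mul (ne_of_gt hDpos)
        (ne_of_gt (pow_pos (inv_pos.2 hkppos) _)), Real.log_pow, Real.log_inv]
      ring
    rw [← this]
    exact Real.log_le_log hD'pos hkey
  have hcast : ((k - 1 : ℕ) : ℝ) = (k:ℝ) - 1 := by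
    have : (1:ℕ) ≤ k := hk
    push_cast [this]
    ring
  rw [hcast]
  linarith
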